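/- Assume the Euclidean four function theorem: if h₁(x)h₂(y) ≤ h₃(x∧y)h₄(x∨y) for all x, y ∈ ℝ^d then (∫h₁)(∫h₂) ≤ (∫h₃)(∫h₄). Let f : ℝ^d → [0,∞) be an integrable log-supermodular function and g : ℝ^d → [0,∞) an integrable function satisfying g(x-u)g(y-w) ≤ g(x∧y - u∧w)·g(x∨y - u∨w) for all x, y, u, w. Then the convolution f * g is log-supermodular. -/

import Mathlib

open MeasureTheory ENNReal

private lemma midpt {d : ℕ} (g : (Fin d → ℝ) → ℝ)
    (hg : ∀ x y u w : Fin d → ℝ, g (x - u) * g (y - w) ≤ g (x ⊓ y - u ⊓ w) * g (x ⊔ y - u ⊔ w)) :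
    ∀ a b : Fin d → ℝ, g a * g b ≤ g ((2:ℝ)⁻¹ • (a + b)) * g ((2:ℝ)⁻¹ • (a + b)) := by
  intro a b
  have H := hg (fun i => if a i ≤ b i then (2:ℝ)⁻¹ * (a i + b i) else a i)
      (fun i => if a i ≤ b i then b i else (2:ℝ)⁻¹ * (a i + b i))
      (fun i => if a i ≤ b i then (b i - a i) / 2 else 0)
      (fun i => if a i ≤ b i then 0 else (a i - b i) / 2)
  have e1 : (fun i => if a i ≤ b i then (2:ℝ)⁻¹ * (a i + b i) else a i) -
      (fun i => if a i ≤ b i then (b i - a i) / 2 else 0) = a := by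
    funext i; simp only [Pi.sub_apply]; split_ifs <;> ring
  have e2 : (fun i => if a i ≤ b i then b i else (2:ℝ)⁻¹ * (a i + b i)) -
      (fun i => if a i ≤ b i then 0 else (a i - b i) / 2) = b := by
    funext i; simp only [Pi.sub_apply]; split_ifs <;> ring
  have e3 : ((fun i => if a i ≤ b i then (2:ℝ)⁻¹ * (a i + b i) else a i) ⊓
        (fun i => if a i ≤ b i then b i else (2:ℝ)⁻¹ * (a i + b i))) -
      ((fun i => if a i ≤ b i then (b i - a i) / 2 else 0) ⊓
        (fun i => if a i ≤ b i then 0 else (a i - b i) / 2)) = (2:ℝ)⁻¹ • (a + b) := by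
    funext i
    simp only [Pi.sub_apply, Pi.inf_apply, Pi.smul_apply, Pi.add_apply, smul_eq_mul]
    rcases le_or_gt (a i) (b i) with h | h
    · simp only [if_pos h]
      rw [min_eq_left (by linarith), min_eq_right (by linarith)]; ring
    · simp only [if_neg (not_le.mpr h)]
      rw [min_eq_right (by linarith), min_eq_left (by linarith)]; ring
  have e4 : ((fun i => if a i ≤ b i then (2:ℝ)⁻¹ * (a i + b i) else a i) ⊔
        (fun i => if a i ≤ b i then b i else (2:ℝ)⁻¹ * (a i + b i))) -
      ((fun i => if a i ≤ b i then (b i - a i) / 2 else 0) ⊔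
        (fun i => if a i ≤ b i then 0 else (a i - b i) / 2)) = (2:ℝ)⁻¹ • (a + b) := by
    funext i
    simp only [Pi.sub_apply, Pi.sup_apply, Pi.smul_apply, Pi.add_apply, smul_eq_mul]
    rcases le_or_gt (a i) (b i) with h | h
    · simp only [if_pos h]
      rw [max_eq_right (by linarith), max_eq_left (by linarith)]; ring
    · simp only [if_neg (not_le.mpr h)]
      rw [max_eq_left (by linarith), max_eq_right (by linarith)]; ring
  rwa [e1, e2, e3, e4] at H


private lemma ae_bdd {d : ℕ} (g : (Fin d → ℝ) → ℝ) (hgnn : ∀ x, 0 ≤ g x) (hgi : Integrable g)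
    (hmid : ∀ a b : Fin d → ℝ, g a * g b ≤ g ((2:ℝ)⁻¹ • (a + b)) * g ((2:ℝ)⁻¹ • (a + b))) :
    ∃ M : ℝ, 0 ≤ M ∧ ∀ᵐ z : Fin d → ℝ, g z ≤ M := by
  set G : (Fin d → ℝ) → ℝ≥0∞ := fun z => ENNReal.ofReal (g z) with hG
  have hGae : AEMeasurable G volume :=
    ENNReal.measurable_ofReal.comp_aemeasurable hgi.aemeasurable
  have hI : ∫⁻ z, G z < ⊤ := by
    have h2 := hgi.2
    rwa [hasFiniteIntegral_iff_ofReal (Filter.Eventually.of_forall hgnn)] at h2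
  by_cases hE : essSup G volume < ⊤
  · refine ⟨(essSup G volume).toReal, ENNReal.toReal_nonneg, ?_⟩
    filter_upwards [ae_le_essSup G] with z hz
    calc g z = (G z).toReal := by simp [hG, ENNReal.toReal_ofReal (hgnn z)]
      _ ≤ (essSup G volume).toReal := ENNReal.toReal_mono hE.ne hz
  · exfalso
    push_neg at hE
    have hEtop : essSup G volume = ⊤ := top_le_iff.mp hE
    obtain ⟨G', hG'meas, hG'eq⟩ := hGae
    have hEtop' : essSup G' volume = ⊤ := by rw [← essSup_congr_ae hG'eq, hEtop]
    set S : Set (Fin d → ℝ) := {z | 1 < G' z} with hS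
    have hSmeas : MeasurableSet S := measurableSet_lt measurable_const hG'meas
    set ν := volume S with hνdef
    have hν0 : ν ≠ 0 := by
      intro h0
      have hle : ∀ᵐ z : Fin d → ℝ, G' z ≤ 1 := by
        rw [ae_iff]; simpa [hS, not_le] using h0
      have := essSup_le_of_ae_le (μ := volume) 1 hle
      rw [hEtop'] at this
      simp at this
    have hνtop : ν ≠ ⊤ := by
      have hsub : ν ≤ volume {z : Fin d → ℝ | 1 ≤ G' z} :=
        measure_mono (fun z hz => (Set.mem_setOf_eq ▸ le_of_lt (hz : (1:ℝ≥0∞) < G' z) : z ∈ {z | 1 ≤ G' z}))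
      have hmar : 1 * volume {z : Fin d → ℝ | 1 ≤ G' z} ≤ ∫⁻ z, G' z :=
        mul_meas_ge_le_lintegral₀ hG'meas.aemeasurable 1
      rw [one_mul] at hmar
      have : ∫⁻ z, G' z = ∫⁻ z, G z := lintegral_congr_ae hG'eq.symm
      exact ((hsub.trans hmar).trans_lt (this ▸ hI)).ne
    set K : ℝ≥0∞ := ENNReal.ofReal (2 ^ d) * ∫⁻ z, G z with hK
    have hKtop : K ≠ ⊤ := ENNReal.mul_ne_top ENNReal.ofReal_ne_top hI.ne
    have hKν : K / ν ≠ ⊤ := (ENNReal.div_lt_top hKtop hν0).ne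
    set r : ℝ := (K / ν).toReal + 1 with hr
    have hr1 : 1 ≤ r := by
      have := ENNReal.toReal_nonneg (a := K / ν)
      simp only [hr]; linarith
    -- find a point a with r * r < g a
    set A : Set (Fin d → ℝ) := {z | ENNReal.ofReal (r * r) < G' z} with hA
    have hA0 : volume A ≠ 0 := by
      intro h0
      have hle : ∀ᵐ z : Fin d → ℝ, G' z ≤ ENNReal.ofReal (r * r) := by
        rw [ae_iff]; simpa [hA, not_le] using h0
      have := essSup_le_of_ae_le (μ := volume) _ hle
      rw [hEtop', top_le_iff] at this
      exact ENNReal.ofReal_ne_top this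
    have hN : volume {z : Fin d → ℝ | G z ≠ G' z} = 0 := by
      rw [← ae_iff] at *
      exact hG'eq
    have hAN : (A \ {z | G z ≠ G' z}).Nonempty := by
      rw [Set.nonempty_iff_ne_empty]
      intro hemp
      have : A ⊆ {z | G z ≠ G' z} := by
        intro z hz
        by_contra hzn
        exact Set.eq_empty_iff_forall_notMem.mp hemp z ⟨hz, hzn⟩
      exact hA0 (le_antisymm ((measure_mono this).trans hN.le) (zero_le))
    obtain ⟨a, haA, haeq⟩ := hAN
    simp only [Set.mem_setOf_eq, not_not] at haeq
    have har : r * r < g a := by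
      have : ENNReal.ofReal (r * r) < ENNReal.ofReal (g a) := by
        have haA' : ENNReal.ofReal (r * r) < G' a := haA
        rw [← haeq] at haA'
        exact haA'
      exact (ENNReal.ofReal_lt_ofReal_iff_of_nonneg (by positivity)).mp this
    set ψ : (Fin d → ℝ) → (Fin d → ℝ) := fun z => (2:ℝ)⁻¹ • (a + z) with hψ
    have hψmeas : Measurable ψ := (measurable_const_add a).const_smul ((2:ℝ)⁻¹)
    have hmap : volume.map ψ = ENNReal.ofReal (2 ^ d) • volume := by
      have hcomp : ψ = (fun y : Fin d → ℝ => (2:ℝ)⁻¹ • y) ∘ (fun z => a + z) := rfl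
      rw [hcomp, ← Measure.map_map (measurable_const_smul _) (measurable_const_add a),
        map_add_left_eq_self volume a,
        Measure.map_addHaar_smul volume (by norm_num : ((2:ℝ)⁻¹) ≠ 0)]
      congr 1
      rw [Module.finrank_fin_fun]
      have h2d : (((2:ℝ)⁻¹) ^ d)⁻¹ = 2 ^ d := by rw [← inv_pow, inv_inv]
      rw [h2d, abs_of_pos (by positivity)]
    have hGmap : AEMeasurable G (volume.map ψ) := by
      rw [hmap]
      exact (aemeasurable_smul_measure_iff
        (ENNReal.ofReal_pos.mpr (by positivity : (0:ℝ) < 2 ^ d)).ne').mpr ⟨G', hG'meas, hG'eq⟩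
    have upper : ∫⁻ z in S, G (ψ z) ≤ K := by
      calc ∫⁻ z in S, G (ψ z) ≤ ∫⁻ z, G (ψ z) := setLIntegral_le_lintegral _ _
        _ = ∫⁻ y, G y ∂(volume.map ψ) := (lintegral_map' hGmap hψmeas.aemeasurable).symm
        _ = K := by rw [hmap, lintegral_smul_measure, smul_eq_mul]
    have hae : ∀ᵐ z ∂volume.restrict S, ENNReal.ofReal r ≤ G (ψ z) := by
      rw [ae_restrict_iff' hSmeas]
      filter_upwards [hG'eq] with z hzeq hzS
      have hgz : 1 < g z := by
        have h1 : (1:ℝ≥0∞) < ENNReal.ofReal (g z) :=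
          lt_of_lt_of_eq (hzS : (1:ℝ≥0∞) < G' z) hzeq.symm
        by_contra hle
        push_neg at hle
        exact absurd h1 (not_lt.mpr (ENNReal.ofReal_le_one.mpr hle))
      have key : r ≤ g (ψ z) := by
        by_contra hlt
        push_neg at hlt
        have h1 := hmid a z
        have hψz : g (ψ z) = g ((2:ℝ)⁻¹ • (a + z)) := rfl
        rw [← hψz] at h1
        nlinarith [hgnn (ψ z), hgnn z, hgnn a, har, hgz, hr1, hlt,
          mul_le_mul hlt.le hlt.le (hgnn (ψ z)) (by linarith : (0:ℝ) ≤ r)]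
      calc ENNReal.ofReal r ≤ ENNReal.ofReal (g (ψ z)) := ENNReal.ofReal_le_ofReal key
        _ = G (ψ z) := rfl
    have lower : ENNReal.ofReal r * ν ≤ ∫⁻ z in S, G (ψ z) := by
      rw [← setLIntegral_const S (ENNReal.ofReal r)]
      exact lintegral_mono_ae hae
    have hcon : K < ENNReal.ofReal r * ν := by
      have h1 : K / ν < ENNReal.ofReal r := by
        rw [ENNReal.lt_ofReal_iff_toReal_lt hKν]
        simp [hr]
      calc K = K / ν * ν := (ENNReal.div_mul_cancel hν0 hνtop).symm
        _ < ENNReal.ofReal r * ν := (ENNReal.mul_lt_mul_iff_left hν0 hνtop).mpr h1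
    exact absurd (lower.trans upper) (not_le.mpr hcon)


theorem convolution_logSupermodular_of_fourFunction (d : ℕ)
    (fourFunction : ∀ h₁ h₂ h₃ h₄ : (Fin d → ℝ) → ℝ,
      (∀ x, 0 ≤ h₁ x) → (∀ x, 0 ≤ h₂ x) → (∀ x, 0 ≤ h₃ x) → (∀ x, 0 ≤ h₄ x) →
      Integrable h₁ → Integrable h₂ → Integrable h₃ → Integrable h₄ →
      (∀ x y, h₁ x * h₂ y ≤ h₃ (x ⊓ y) * h₄ (x ⊔ y)) →
      (∫ x, h₁ x) * (∫ y, h₂ y) ≤ (∫ x, h₃ x) * (∫ y, h₄ y))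
    (f g : (Fin d → ℝ) → ℝ)
    (hfnn : ∀ x, 0 ≤ f x) (hgnn : ∀ x, 0 ≤ g x)
    (hfi : Integrable f) (hgi : Integrable g)
    (hf : ∀ u w, f u * f w ≤ f (u ⊓ w) * f (u ⊔ w))
    (hg : ∀ x y u w, g (x - u) * g (y - w) ≤ g (x ⊓ y - u ⊓ w) * g (x ⊔ y - u ⊔ w)) :
    ∀ x y, (∫ z, f z * g (x - z)) * (∫ z, f z * g (y - z)) ≤
      (∫ z, f z * g (x ⊓ y - z)) * (∫ z, f z * g (x ⊔ y - z)) := by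
  obtain ⟨M, hM0, hMae⟩ := ae_bdd g hgnn hgi (midpt g hg)
  have key : ∀ c : Fin d → ℝ, Integrable (fun z => f z * g (c - z)) := by
    intro c
    have hmp : MeasurePreserving (fun z : Fin d → ℝ => c - z) volume volume :=
      Measure.measurePreserving_sub_left volume c
    have hsm : AEStronglyMeasurable (fun z => f z * g (c - z)) volume :=
      hfi.aestronglyMeasurable.mul (hgi.aestronglyMeasurable.comp_measurePreserving hmp)
    have hae : ∀ᵐ z : Fin d → ℝ, g (c - z) ≤ M := by
      have h' : ∀ᵐ w ∂(Measure.map (fun z : Fin d → ℝ => c - z) volume), g w ≤ M := by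
        rw [hmp.map_eq]; exact hMae
      exact ae_of_ae_map hmp.measurable.aemeasurable h'
    refine Integrable.mono (hfi.const_mul M) hsm ?_
    filter_upwards [hae] with z hz
    rw [Real.norm_eq_abs, Real.norm_eq_abs, abs_of_nonneg (mul_nonneg (hfnn z) (hgnn _)),
      abs_of_nonneg (mul_nonneg hM0 (hfnn z))]
    calc f z * g (c - z) ≤ f z * M := mul_le_mul_of_nonneg_left hz (hfnn z)
      _ = M * f z := mul_comm _ _
  intro x y
  refine fourFunction _ _ _ _
    (fun z => mul_nonneg (hfnn z) (hgnn _)) (fun z => mul_nonneg (hfnn z) (hgnn _))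
    (fun z => mul_nonneg (hfnn z) (hgnn _)) (fun z => mul_nonneg (hfnn z) (hgnn _))
    (key x) (key y) (key (x ⊓ y)) (key (x ⊔ y)) ?_
  intro u w
  calc f u * g (x - u) * (f w * g (y - w)) = (f u * f w) * (g (x - u) * g (y - w)) := by ring
    _ ≤ (f (u ⊓ w) * f (u ⊔ w)) * (g (x ⊓ y - u ⊓ w) * g (x ⊔ y - u ⊔ w)) :=
        mul_le_mul (hf u w) (hg x y u w)
          (mul_nonneg (hgnn _) (hgnn _)) (mul_nonneg (hfnn _) (hfnn _))
    _ = f (u ⊓ w) * g (x ⊓ y - u ⊓ w) * (f (u ⊔ w) * g (x ⊔ y - u ⊔ w)) := by ring
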